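/- For every m ≥ 1 and every c, j ∈ ℕ, the map j ↦ A_{m-1}^{j+1}(c − j + 1) (defined for j ≤ c) is monotonically nondecreasing in j. -/
import Mathlib


def A : ℕ → ℕ → ℕ
  | 0, n => n + 1
  | m+1, n => (A m)^[n+1] 1

def theta (c : ℕ) (w : List ℕ) : ℕ := w.foldr A c

lemma A_iter_ge (m : ℕ) : ∀ k x : ℕ, x + k ≤ (A m)^[k] x := by
  intro k
  induction k with
  | zero => simp
  | succ k ih =>
    intro x
    rw [Function.iterate_succ_apply]
    calc x + (k+1) = (x+1) + k := by ring
    _ ≤ (A m x) + k := by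
        have : x + 1 ≤ A m x := by
          cases m with
          | zero => simp [A]
          | succ m =>
            have := A_iter_ge m (x+1) 1
            show x + 1 ≤ (A m)^[x+1] 1
            omega
        omega
    _ ≤ (A m)^[k] (A m x) := ih _

lemma A_ge (m x : ℕ) : x + 1 ≤ A m x := by
  cases m with
  | zero => simp [A]
  | succ m =>
    have := A_iter_ge m (x+1) 1
    show x + 1 ≤ (A m)^[x+1] 1
    omega

lemma A_mono (m : ℕ) : Monotone (A m) := by
  induction m with
  | zero => intro a b h; simp [A]; omega
  | succ m ih =>
    intro a b h
    simp only [A]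
    have : (A m)^[b+1] 1 = (A m)^[b - a] ((A m)^[a+1] 1) := by
      rw [← Function.iterate_add_apply]
      congr 1
      omega
    rw [this]
    have := A_iter_ge m (b - a) ((A m)^[a+1] 1)
    omega

theorem stmt17 : ∀ m : ℕ, 1 ≤ m → ∀ c j j' : ℕ, j ≤ j' → j' ≤ c →
    (A (m - 1))^[j + 1] (c - j + 1) ≤ (A (m - 1))^[j' + 1] (c - j' + 1) := by
  intro m _ c j j' hjj' hj'c
  induction j' with
  | zero =>
      have : j = 0 := by omega
      subst this; rfl
  | succ j' ih =>
    rcases Nat.lt_or_ge j (j'+1) with h | h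
    · have h1 : (A (m-1))^[j+1] (c - j + 1) ≤ (A (m-1))^[j'+1] (c - j' + 1) :=
        ih (by omega) (by omega)
      have h2 : (A (m-1))^[j'+1] (c - j' + 1) ≤ (A (m-1))^[j'+1+1] (c - (j'+1) + 1) := by
        rw [Function.iterate_succ_apply]
        apply ((A_mono (m-1)).iterate (j'+1))
        have := A_ge (m-1) (c - (j'+1) + 1)
        omega
      exact le_trans h1 h2
    · have : j = j' + 1 := by omega
      subst this; rfl
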